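/- Let I ⊆ ℝ be a nonempty open interval and y : I → ℝ a C⁵ function with y''(x) ≠ 0 for all x ∈ I. Then 9·y''(x)²·y⁽⁵⁾(x) − 45·y''(x)·y'''(x)·y⁽⁴⁾(x) + 40·y'''(x)³ = 0 for all x ∈ I if and only if the graph of y is contained in a conic, i.e., there exists a nonzero polynomial Q(X,Y) of total degree at most 2 with Q(x, y(x)) = 0 for all x ∈ I. (Thus the vanishing of the projective relative invariant R₅ = 9y₂²y₅ − 45y₂y₃y₄ + 40y₃³ characterizes conics, straight lines arising as the degenerate case y'' ≡ 0.) -/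

import Mathlib

noncomputable section
open MvPolynomial

def conic (a b c d e f : ℝ) : MvPolynomial (Fin 2) ℝ :=
  C a * X 0 ^ 2 + C b * (X 0 * X 1) + C c * X 1 ^ 2 + C d * X 0 + C e * X 1 + C f

lemma conic_eval (a b c d e f x yy : ℝ) :
    MvPolynomial.eval ![x, yy] (conic a b c d e f)
      = a * x ^ 2 + b * (x * yy) + c * yy ^ 2 + d * x + e * yy + f := by
  simp [conic]

lemma deg2 (a : ℝ) (p : MvPolynomial (Fin 2) ℝ) (hp : p.totalDegree ≤ 2) :
    (C a * p).totalDegree ≤ 2 := by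
  refine le_trans (totalDegree_mul _ _) ?_
  simpa using hp

lemma conic_totalDegree (a b c d e f : ℝ) : (conic a b c d e f).totalDegree ≤ 2 := by
  unfold conic
  refine le_trans (totalDegree_add _ _) (max_le (le_trans (totalDegree_add _ _) (max_le
    (le_trans (totalDegree_add _ _) (max_le (le_trans (totalDegree_add _ _) (max_le
    (le_trans (totalDegree_add _ _) (max_le ?_ ?_)) ?_)) ?_)) ?_)) ?_)
  · exact deg2 _ _ (by simp [totalDegree_X_pow])
  · refine deg2 _ _ (le_trans (totalDegree_mul _ _) ?_)
    simp [totalDegree_X]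
  · exact deg2 _ _ (by simp [totalDegree_X_pow])
  · exact deg2 _ _ (by simp [totalDegree_X])
  · exact deg2 _ _ (by simp [totalDegree_X])
  · simp

lemma finsupp2_ext_iff (m m' : Fin 2 →₀ ℕ) : m = m' ↔ m 0 = m' 0 ∧ m 1 = m' 1 := by
  constructor
  · rintro rfl; exact ⟨rfl, rfl⟩
  · rintro ⟨h0, h1⟩; ext i; fin_cases i <;> assumption

lemma finsupp2_sum' (m : Fin 2 →₀ ℕ) : (∑ i ∈ m.support, m i) = m 0 + m 1 := by
  rw [← Fin.sum_univ_two (f := fun i => m i)]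
  exact Finset.sum_subset (Finset.subset_univ _)
    (fun i _ hi => Finsupp.notMem_support_iff.mp hi)

lemma X01 : (X 0 * X 1 : MvPolynomial (Fin 2) ℝ)
    = monomial (Finsupp.single 0 1 + Finsupp.single 1 1) 1 := by
  rw [X, X, monomial_mul, one_mul]

lemma mem_six (m : Fin 2 →₀ ℕ) (h : m 0 + m 1 ≤ 2) :
    m = 0 ∨ m = Finsupp.single 0 1 ∨ m = Finsupp.single 1 1 ∨ m = Finsupp.single 0 2 ∨
      m = Finsupp.single 0 1 + Finsupp.single 1 1 ∨ m = Finsupp.single 1 2 := by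
  have h0 : m 0 = 0 ∨ m 0 = 1 ∨ m 0 = 2 := by omega
  have h1 : m 1 = 0 ∨ m 1 = 1 ∨ m 1 = 2 := by omega
  simp only [finsupp2_ext_iff, Finsupp.add_apply, Finsupp.single_apply, Finsupp.coe_zero,
    Pi.zero_apply]
  norm_num
  omega

lemma eq_conic (Q : MvPolynomial (Fin 2) ℝ) (hQ : Q.totalDegree ≤ 2) :
    Q = conic (coeff (Finsupp.single 0 2) Q)
      (coeff (Finsupp.single 0 1 + Finsupp.single 1 1) Q)
      (coeff (Finsupp.single 1 2) Q)
      (coeff (Finsupp.single 0 1) Q) (coeff (Finsupp.single 1 1) Q) (coeff 0 Q) := by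
  ext m
  by_cases hm : m 0 + m 1 ≤ 2
  · rcases mem_six m hm with rfl | rfl | rfl | rfl | rfl | rfl <;>
    · simp only [conic, coeff_add, coeff_C_mul, coeff_X_pow, X01, coeff_monomial, coeff_C, coeff_X']
      simp [finsupp2_ext_iff, Finsupp.single_apply]
  · have hz : coeff m Q = 0 := by
      apply coeff_eq_zero_of_totalDegree_lt
      calc Q.totalDegree ≤ 2 := hQ
        _ < ∑ i ∈ m.support, m i := by rw [finsupp2_sum']; omega
    rw [hz]
    simp only [conic, coeff_add, coeff_C_mul, coeff_X_pow, X01, coeff_monomial, coeff_C,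
      coeff_X']
    simp only [finsupp2_ext_iff, Finsupp.add_apply, Finsupp.single_apply, Finsupp.coe_zero,
      Pi.zero_apply]
    norm_num
    have e1 : ¬(2 = m 0 ∧ 0 = m 1) := by omega
    have e2 : ¬(1 = m 0 ∧ 1 = m 1) := by omega
    have e3 : ¬(0 = m 0 ∧ 2 = m 1) := by omega
    have e4 : ¬(1 = m 0 ∧ 0 = m 1) := by omega
    have e5 : ¬(0 = m 0 ∧ 1 = m 1) := by omega
    have e6 : ¬(0 = m 0 ∧ 0 = m 1) := by omega
    simp [e1, e2, e3, e4, e5, e6]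

lemma conic_coeff_c (a b c d e f : ℝ) :
    coeff (Finsupp.single 1 2) (conic a b c d e f) = c := by
  simp only [conic, coeff_add, coeff_C_mul, coeff_X_pow, X01, coeff_monomial, coeff_C, coeff_X']
  simp [finsupp2_ext_iff, Finsupp.single_apply]

lemma conic_coeff_b (a b c d e f : ℝ) :
    coeff (Finsupp.single 0 1 + Finsupp.single 1 1) (conic a b c d e f) = b := by
  simp only [conic, coeff_add, coeff_C_mul, coeff_X_pow, X01, coeff_monomial, coeff_C, coeff_X']
  simp [finsupp2_ext_iff, Finsupp.add_apply, Finsupp.single_apply]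

lemma conic_coeff_e (a b c d e f : ℝ) :
    coeff (Finsupp.single 1 1) (conic a b c d e f) = e := by
  simp only [conic, coeff_add, coeff_C_mul, coeff_X_pow, X01, coeff_monomial, coeff_C, coeff_X']
  simp [finsupp2_ext_iff, Finsupp.single_apply]

lemma conic_coeff_a (a b c d e f : ℝ) :
    coeff (Finsupp.single 0 2) (conic a b c d e f) = a := by
  simp only [conic, coeff_add, coeff_C_mul, coeff_X_pow, X01, coeff_monomial, coeff_C, coeff_X']
  simp [finsupp2_ext_iff, Finsupp.add_apply, Finsupp.single_apply]

lemma conic_coeff_d (a b c d e f : ℝ) :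
    coeff (Finsupp.single 0 1) (conic a b c d e f) = d := by
  simp only [conic, coeff_add, coeff_C_mul, coeff_X_pow, X01, coeff_monomial, coeff_C, coeff_X']
  simp [finsupp2_ext_iff, Finsupp.add_apply, Finsupp.single_apply]

lemma conic_coeff_f (a b c d e f : ℝ) :
    coeff (0 : Fin 2 →₀ ℕ) (conic a b c d e f) = f := by
  simp only [conic, coeff_add, coeff_C_mul, coeff_X_pow, X01, coeff_monomial, coeff_C, coeff_X']
  simp [finsupp2_ext_iff, Finsupp.add_apply, Finsupp.single_apply]

lemma conic_ne_zero (a b c d e f : ℝ) (h : ¬(a = 0 ∧ b = 0 ∧ c = 0 ∧ d = 0 ∧ e = 0 ∧ f = 0)) :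
    conic a b c d e f ≠ 0 := by
  intro h0
  refine h ⟨?_, ?_, ?_, ?_, ?_, ?_⟩
  · rw [← conic_coeff_a a b c d e f, h0]; simp
  · rw [← conic_coeff_b a b c d e f, h0]; simp
  · rw [← conic_coeff_c a b c d e f, h0]; simp
  · rw [← conic_coeff_d a b c d e f, h0]; simp
  · rw [← conic_coeff_e a b c d e f, h0]; simp
  · rw [← conic_coeff_f a b c d e f, h0]; simp


lemma deriv_zero_of_eqOn_zero {I : Set ℝ} (hI : IsOpen I) {f : ℝ → ℝ}
    (hf : ∀ x ∈ I, f x = 0) : ∀ x ∈ I, deriv f x = 0 := by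
  intro x hx
  have : f =ᶠ[nhds x] (fun _ => 0) :=
    Filter.eventually_of_mem (hI.mem_nhds hx) hf
  rw [this.deriv_eq]
  simp

lemma chain5 {I : Set ℝ} (hI : IsOpen I) {y : ℝ → ℝ} (hy : ContDiffOn ℝ 5 y I) :
    (∀ x ∈ I, DifferentiableAt ℝ y x) ∧
    (∀ x ∈ I, DifferentiableAt ℝ (deriv y) x) ∧
    (∀ x ∈ I, DifferentiableAt ℝ (deriv (deriv y)) x) ∧
    (∀ x ∈ I, DifferentiableAt ℝ (deriv (deriv (deriv y))) x) ∧
    (∀ x ∈ I, DifferentiableAt ℝ (deriv (deriv (deriv (deriv y)))) x) := by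
  have h4 : ContDiffOn ℝ 4 (deriv y) I := hy.deriv_of_isOpen hI (by norm_num)
  have h3 : ContDiffOn ℝ 3 (deriv (deriv y)) I := h4.deriv_of_isOpen hI (by norm_num)
  have h2 : ContDiffOn ℝ 2 (deriv (deriv (deriv y))) I := h3.deriv_of_isOpen hI (by norm_num)
  have h1 : ContDiffOn ℝ 1 (deriv (deriv (deriv (deriv y)))) I :=
    h2.deriv_of_isOpen hI (by norm_num)
  exact ⟨fun x hx => (hy.differentiableOn (by norm_num)).differentiableAt (hI.mem_nhds hx),
    fun x hx => (h4.differentiableOn (by norm_num)).differentiableAt (hI.mem_nhds hx),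
    fun x hx => (h3.differentiableOn (by norm_num)).differentiableAt (hI.mem_nhds hx),
    fun x hx => (h2.differentiableOn (by norm_num)).differentiableAt (hI.mem_nhds hx),
    fun x hx => (h1.differentiableOn (by norm_num)).differentiableAt (hI.mem_nhds hx)⟩

lemma backward {I : Set ℝ} (hI : IsOpen I) {y : ℝ → ℝ}
    (hy : ContDiffOn ℝ 5 y I) (hy2 : ∀ x ∈ I, deriv (deriv y) x ≠ 0)
    {a b c d e f : ℝ}
    (hvan : ∀ x ∈ I, a * x ^ 2 + b * (x * y x) + c * (y x) ^ 2 + d * x + e * (y x) + f = 0)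
    (hnz : ¬(a = 0 ∧ b = 0 ∧ c = 0 ∧ d = 0 ∧ e = 0 ∧ f = 0)) :
    ∀ x ∈ I,
      9 * (deriv (deriv y) x) ^ 2 * deriv (deriv (deriv (deriv (deriv y)))) x -
        45 * deriv (deriv y) x * deriv (deriv (deriv y)) x *
          deriv (deriv (deriv (deriv y))) x +
        40 * (deriv (deriv (deriv y)) x) ^ 3 = 0 := by
  obtain ⟨d0, d1, d2, d3, d4⟩ := chain5 hI hy
  set y1 := deriv y with hy1e
  set y2 := deriv y1 with hy2e
  set y3 := deriv y2 with hy3e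
  set y4 := deriv y3 with hy4e
  set y5 := deriv y4 with hy5e
  -- derivative steps
  have key : ∀ F G : ℝ → ℝ, (∀ x ∈ I, HasDerivAt F (G x) x) → (∀ x ∈ I, F x = 0) →
      ∀ x ∈ I, G x = 0 := by
    intro F G hFG hF0 x hx
    have h1 := deriv_zero_of_eqOn_zero hI hF0 x hx
    rwa [(hFG x hx).deriv] at h1
  have hg1 : ∀ x ∈ I,
      2*a*x + b*(y x) + b*(x*y1 x) + 2*c*(y x*y1 x) + d + e*(y1 x) = 0 := by
    refine key _ _ (fun x hx => ?_) hvan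
    have hY : HasDerivAt y (y1 x) x := (d0 x hx).hasDerivAt
    have H := ((hasDerivAt_pow 2 x).const_mul a)
      |>.add (((hasDerivAt_id x).mul hY).const_mul b)
      |>.add ((hY.pow 2).const_mul c)
      |>.add ((hasDerivAt_id x).const_mul d)
      |>.add (hY.const_mul e)
      |>.add_const f
    refine H.congr_deriv ?_; symm
    simp only [id_eq]
    push_cast
    ring
  have hg2 : ∀ x ∈ I,
      2*a + 2*b*(y1 x) + b*(x*y2 x) + 2*c*(y1 x)^2 + 2*c*(y x*y2 x) + e*(y2 x) = 0 := by
    refine key _ _ (fun x hx => ?_) hg1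
    have hY : HasDerivAt y (y1 x) x := (d0 x hx).hasDerivAt
    have hY1 : HasDerivAt y1 (y2 x) x := (d1 x hx).hasDerivAt
    have H := ((hasDerivAt_id x).const_mul (2*a))
      |>.add (hY.const_mul b)
      |>.add (((hasDerivAt_id x).mul hY1).const_mul b)
      |>.add ((hY.mul hY1).const_mul (2*c))
      |>.add_const d
      |>.add (hY1.const_mul e)
    refine H.congr_deriv ?_; symm
    simp only [id_eq]
    push_cast
    ring
  have hg3 : ∀ x ∈ I,
      3*b*(y2 x) + b*(x*y3 x) + 6*c*(y1 x*y2 x) + 2*c*(y x*y3 x) + e*(y3 x) = 0 := by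
    refine key _ _ (fun x hx => ?_) hg2
    have hY : HasDerivAt y (y1 x) x := (d0 x hx).hasDerivAt
    have hY1 : HasDerivAt y1 (y2 x) x := (d1 x hx).hasDerivAt
    have hY2 : HasDerivAt y2 (y3 x) x := (d2 x hx).hasDerivAt
    have H := (hasDerivAt_const x (2*a))
      |>.add (hY1.const_mul (2*b))
      |>.add (((hasDerivAt_id x).mul hY2).const_mul b)
      |>.add ((hY1.pow 2).const_mul (2*c))
      |>.add ((hY.mul hY2).const_mul (2*c))
      |>.add (hY2.const_mul e)
    refine H.congr_deriv ?_; symm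
    simp only [id_eq]
    push_cast
    ring
  have hg4 : ∀ x ∈ I,
      4*b*(y3 x) + b*(x*y4 x) + 6*c*(y2 x)^2 + 8*c*(y1 x*y3 x) + 2*c*(y x*y4 x)
        + e*(y4 x) = 0 := by
    refine key _ _ (fun x hx => ?_) hg3
    have hY : HasDerivAt y (y1 x) x := (d0 x hx).hasDerivAt
    have hY1 : HasDerivAt y1 (y2 x) x := (d1 x hx).hasDerivAt
    have hY2 : HasDerivAt y2 (y3 x) x := (d2 x hx).hasDerivAt
    have hY3 : HasDerivAt y3 (y4 x) x := (d3 x hx).hasDerivAt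
    have H := (hY2.const_mul (3*b))
      |>.add (((hasDerivAt_id x).mul hY3).const_mul b)
      |>.add ((hY1.mul hY2).const_mul (6*c))
      |>.add ((hY.mul hY3).const_mul (2*c))
      |>.add (hY3.const_mul e)
    refine H.congr_deriv ?_; symm
    simp only [id_eq]
    push_cast
    ring
  have hg5 : ∀ x ∈ I,
      5*b*(y4 x) + b*(x*y5 x) + 20*c*(y2 x*y3 x) + 10*c*(y1 x*y4 x) + 2*c*(y x*y5 x)
        + e*(y5 x) = 0 := by
    refine key _ _ (fun x hx => ?_) hg4
    have hY : HasDerivAt y (y1 x) x := (d0 x hx).hasDerivAt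
    have hY1 : HasDerivAt y1 (y2 x) x := (d1 x hx).hasDerivAt
    have hY2 : HasDerivAt y2 (y3 x) x := (d2 x hx).hasDerivAt
    have hY3 : HasDerivAt y3 (y4 x) x := (d3 x hx).hasDerivAt
    have hY4 : HasDerivAt y4 (y5 x) x := (d4 x hx).hasDerivAt
    have H := (hY3.const_mul (4*b))
      |>.add (((hasDerivAt_id x).mul hY4).const_mul b)
      |>.add ((hY2.pow 2).const_mul (6*c))
      |>.add ((hY1.mul hY3).const_mul (8*c))
      |>.add ((hY.mul hY4).const_mul (2*c))
      |>.add (hY4.const_mul e)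
    refine H.congr_deriv ?_; symm
    simp only [id_eq]
    push_cast
    ring
  -- L never vanishes
  have hL : ∀ x ∈ I, b*x + 2*c*(y x) + e ≠ 0 := by
    intro x hx hL0
    have h2x := hy2 x hx
    have hLp : b + 2*c*(y1 x) = 0 := by
      have h30 := hg3 x hx
      have h1 : (b + 2*c*(y1 x)) * y2 x = 0 := by
        linear_combination (1/3) * h30 - (1/3) * (y3 x) * hL0
      rcases mul_eq_zero.mp h1 with h | h
      · exact h
      · exact absurd h h2x
    have hc : c = 0 := by
      have h40 := hg4 x hx
      have h1 : c * (y2 x)^2 = 0 := by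
        linear_combination (1/6) * h40 - (1/6) * (y4 x) * hL0 - (2/3) * (y3 x) * hLp
      rcases mul_eq_zero.mp h1 with h | h
      · exact h
      · exact absurd (pow_eq_zero_iff (by norm_num) |>.mp h) h2x
    have hb : b = 0 := by linear_combination hLp - 2*(y1 x)*hc
    have he : e = 0 := by linear_combination hL0 - x*hb - 2*(y x)*hc
    have ha : a = 0 := by
      have h20 := hg2 x hx
      linear_combination (1/2)*h20 - (y1 x + x*(y2 x)/2)*hb - ((y1 x)^2 + (y x)*(y2 x))*hc
        - ((y2 x)/2)*he
    have hd : d = 0 := by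
      have h10 := hg1 x hx
      linear_combination h10 - 2*x*ha - (y x + x*(y1 x))*hb - 2*(y x)*(y1 x)*hc - (y1 x)*he
    have hf : f = 0 := by
      have h00 := hvan x hx
      linear_combination h00 - x^2*ha - x*(y x)*hb - (y x)^2*hc - x*hd - (y x)*he
    exact hnz ⟨ha, hb, hc, hd, he, hf⟩
  -- final computation
  intro x hx
  have hLx := hL x hx
  have hLL : (b*x + 2*c*(y x) + e) ≠ 0 := hLx
  have h3 : y3 x = -3*(b + 2*c*(y1 x))*(y2 x) / (b*x + 2*c*(y x) + e) := by
    rw [eq_div_iff hLL]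
    linear_combination hg3 x hx
  have h4 : y4 x = (-4*(b + 2*c*(y1 x))*(y3 x) - 6*c*(y2 x)^2) / (b*x + 2*c*(y x) + e) := by
    rw [eq_div_iff hLL]
    linear_combination hg4 x hx
  have h5 : y5 x = (-5*(b + 2*c*(y1 x))*(y4 x) - 20*c*(y2 x)*(y3 x))
      / (b*x + 2*c*(y x) + e) := by
    rw [eq_div_iff hLL]
    linear_combination hg5 x hx
  rw [h5, h4, h3]
  field_simp
  ring


lemma const_of_hasDerivAt_zero {I : Set ℝ} (hI : IsOpen I) (hconv : Convex ℝ I)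
    {f : ℝ → ℝ} (hf : ∀ x ∈ I, HasDerivAt f 0 x)
    {x₀ x : ℝ} (hx : x ∈ I) (h₀ : x₀ ∈ I) : f x = f x₀ := by
  apply Convex.is_const_of_fderivWithin_eq_zero (𝕜 := ℝ) hconv
    (fun z hz => ((hf z hz).differentiableAt).differentiableWithinAt) ?_ hx h₀
  intro z hz
  rw [fderivWithin_of_isOpen hI hz, ((hf z hz).hasFDerivAt).fderiv]
  ext
  simp

lemma chain5' {I : Set ℝ} (hI : IsOpen I) {y : ℝ → ℝ} (hy : ContDiffOn ℝ 5 y I) :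
    (∀ x ∈ I, DifferentiableAt ℝ y x) ∧
    (∀ x ∈ I, DifferentiableAt ℝ (deriv y) x) ∧
    (∀ x ∈ I, DifferentiableAt ℝ (deriv (deriv y)) x) ∧
    (∀ x ∈ I, DifferentiableAt ℝ (deriv (deriv (deriv y))) x) ∧
    (∀ x ∈ I, DifferentiableAt ℝ (deriv (deriv (deriv (deriv y)))) x) := by
  have h4 : ContDiffOn ℝ 4 (deriv y) I := hy.deriv_of_isOpen hI (by norm_num)
  have h3 : ContDiffOn ℝ 3 (deriv (deriv y)) I := h4.deriv_of_isOpen hI (by norm_num)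
  have h2 : ContDiffOn ℝ 2 (deriv (deriv (deriv y))) I := h3.deriv_of_isOpen hI (by norm_num)
  have h1 : ContDiffOn ℝ 1 (deriv (deriv (deriv (deriv y)))) I :=
    h2.deriv_of_isOpen hI (by norm_num)
  exact ⟨fun x hx => (hy.differentiableOn (by norm_num)).differentiableAt (hI.mem_nhds hx),
    fun x hx => (h4.differentiableOn (by norm_num)).differentiableAt (hI.mem_nhds hx),
    fun x hx => (h3.differentiableOn (by norm_num)).differentiableAt (hI.mem_nhds hx),
    fun x hx => (h2.differentiableOn (by norm_num)).differentiableAt (hI.mem_nhds hx),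
    fun x hx => (h1.differentiableOn (by norm_num)).differentiableAt (hI.mem_nhds hx)⟩

set_option maxHeartbeats 1000000 in
lemma key_pos {I : Set ℝ} (hI : IsOpen I) (hne : I.Nonempty) (hconn : IsPreconnected I)
    {y : ℝ → ℝ} (hy : ContDiffOn ℝ 5 y I)
    (hpos : ∀ x ∈ I, 0 < deriv (deriv y) x)
    (hR : ∀ x ∈ I,
      9 * (deriv (deriv y) x) ^ 2 * deriv (deriv (deriv (deriv (deriv y)))) x -
        45 * deriv (deriv y) x * deriv (deriv (deriv y)) x *
          deriv (deriv (deriv (deriv y))) x +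
        40 * (deriv (deriv (deriv y)) x) ^ 3 = 0) :
    ∃ a b c d e f : ℝ, ¬(a = 0 ∧ b = 0 ∧ c = 0 ∧ d = 0 ∧ e = 0 ∧ f = 0) ∧
      ∀ x ∈ I, a * x ^ 2 + b * (x * y x) + c * (y x) ^ 2 + d * x + e * (y x) + f = 0 := by
  obtain ⟨d0, d1, d2, d3, d4⟩ := chain5' hI hy
  obtain ⟨x₀, hx₀⟩ := hne
  have hconv : Convex ℝ I := hconn.ordConnected.convex
  set y1 := deriv y with hy1e
  set y2 := deriv y1 with hy2e
  set y3 := deriv y2 with hy3e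
  set y4 := deriv y3 with hy4e
  set y5 := deriv y4 with hy5e
  have lin0 : ∀ F : ℝ → ℝ, (∀ x ∈ I, HasDerivAt F 0 x) → ∀ x ∈ I, F x = F x₀ :=
    fun F hF x hx => const_of_hasDerivAt_zero hI hconv hF hx hx₀
  -- u and its derivatives
  set u : ℝ → ℝ := fun x => y2 x ^ (-2/3 : ℝ) with hue
  set U1 : ℝ → ℝ := fun x => (-2/3 : ℝ) * (y2 x ^ (-5/3 : ℝ) * y3 x) with hU1e
  set U2 : ℝ → ℝ := fun x =>
    (10/9 : ℝ) * (y2 x ^ (-8/3 : ℝ) * (y3 x) ^ 2)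
      + (-2/3 : ℝ) * (y2 x ^ (-5/3 : ℝ) * y4 x) with hU2e
  have hU1 : ∀ x ∈ I, HasDerivAt u (U1 x) x := by
    intro x hx
    have h := (d2 x hx).hasDerivAt.rpow_const (p := (-2/3 : ℝ)) (Or.inl (hpos x hx).ne')
    refine h.congr_deriv ?_; symm
    rw [hU1e, show (-2/3 : ℝ) - 1 = (-5/3 : ℝ) by norm_num]
    ring
  have hU2 : ∀ x ∈ I, HasDerivAt U1 (U2 x) x := by
    intro x hx
    have h := ((((d2 x hx).hasDerivAt.rpow_const (p := (-5/3 : ℝ))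
      (Or.inl (hpos x hx).ne')).mul (d3 x hx).hasDerivAt).const_mul (-2/3 : ℝ))
    refine h.congr_deriv ?_; symm
    rw [hU2e, show (-5/3 : ℝ) - 1 = (-8/3 : ℝ) by norm_num]
    ring
  have hU3 : ∀ x ∈ I, HasDerivAt U2 0 x := by
    intro x hx
    have hp := hpos x hx
    have h := ((((d2 x hx).hasDerivAt.rpow_const (p := (-8/3 : ℝ))
        (Or.inl hp.ne')).mul ((d3 x hx).hasDerivAt.pow 2)).const_mul (10/9 : ℝ)).add
      ((((d2 x hx).hasDerivAt.rpow_const (p := (-5/3 : ℝ))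
        (Or.inl hp.ne')).mul (d4 x hx).hasDerivAt).const_mul (-2/3 : ℝ))
    refine h.congr_deriv ?_; symm
    rw [show (-8/3 : ℝ) - 1 = (-11/3 : ℝ) by norm_num,
      show (-5/3 : ℝ) - 1 = (-8/3 : ℝ) by norm_num]
    have h1 : y2 x ^ (-8/3 : ℝ) = y2 x ^ (-11/3 : ℝ) * y2 x := by
      rw [show (-8/3 : ℝ) = (-11/3 : ℝ) + 1 by norm_num, Real.rpow_add hp, Real.rpow_one]
    have h2 : y2 x ^ (-5/3 : ℝ) = y2 x ^ (-11/3 : ℝ) * y2 x * y2 x := by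
      rw [show (-5/3 : ℝ) = (-11/3 : ℝ) + 1 + 1 by norm_num, Real.rpow_add hp,
        Real.rpow_add hp, Real.rpow_one]
    rw [h1, h2]
    simp only [← hy3e, ← hy4e, ← hy5e, Pi.pow_apply]
    push_cast
    linear_combination (2/27 : ℝ) * (y2 x ^ (-11/3 : ℝ)) * hR x hx
  -- u is a quadratic polynomial on I
  have hU2c : ∀ x ∈ I, U2 x = U2 x₀ := lin0 U2 hU3
  set A : ℝ := U2 x₀ / 2 with hA
  have hU1lin : ∀ x ∈ I, U1 x = 2*A*x + (U1 x₀ - 2*A*x₀) := by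
    intro x hx
    have h := lin0 (fun x => U1 x - 2*A*x) (fun x hx => by
      have h' := (hU2 x hx).sub (((hasDerivAt_id x).const_mul (2*A)))
      have h'' : HasDerivAt (fun x => U1 x - 2*A*x) 0 x := by
        refine h'.congr_deriv ?_; symm
        rw [hU2c x hx, hA]
        ring
      exact h'') x hx
    have h2 : U1 x - 2*A*x = U1 x₀ - 2*A*x₀ := h
    linarith [h2]
  set B : ℝ := U1 x₀ - 2*A*x₀ with hB
  have hulin : ∀ x ∈ I, u x = A*x^2 + B*x + (u x₀ - A*x₀^2 - B*x₀) := by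
    intro x hx
    have h := lin0 (fun x => u x - A*x^2 - B*x) (fun x hx => by
      have h' := ((hU1 x hx).sub (((hasDerivAt_pow 2 x).const_mul A))).sub
        ((hasDerivAt_id x).const_mul B)
      have h'' : HasDerivAt (fun x => u x - A*x^2 - B*x) 0 x := by
        refine h'.congr_deriv ?_; symm
        rw [hU1lin x hx]
        push_cast
        ring
      exact h'') x hx
    have h2 : u x - A*x^2 - B*x = u x₀ - A*x₀^2 - B*x₀ := h
    linarith [h2]
  set Cc : ℝ := u x₀ - A*x₀^2 - B*x₀ with hCc
  clear hCc hA hB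
  have hqpos : ∀ x ∈ I, (0:ℝ) < A*x^2 + B*x + Cc := by
    intro x hx
    rw [← hulin x hx]
    exact Real.rpow_pos_of_pos (hpos x hx) _
  have hy2q : ∀ x ∈ I, y2 x = (A*x^2 + B*x + Cc) ^ (-3/2 : ℝ) := by
    intro x hx
    rw [← hulin x hx]
    show y2 x = (y2 x ^ (-2/3 : ℝ)) ^ (-3/2 : ℝ)
    rw [← Real.rpow_mul (hpos x hx).le, show ((-2/3 : ℝ) * (-3/2 : ℝ)) = 1 by norm_num,
      Real.rpow_one]
  have hq' : ∀ x : ℝ, HasDerivAt (fun x => A*x^2 + B*x + Cc) (2*A*x + B) x := by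
    intro x
    have h := (((hasDerivAt_pow 2 x).const_mul A).add
      ((hasDerivAt_id x).const_mul B)).add_const Cc
    refine h.congr_deriv ?_; symm
    push_cast
    ring
  set D : ℝ := 4*A*Cc - B^2 with hD
  clear_value A B Cc D
  rcases eq_or_ne D 0 with hΔ | hΔ
  · -- degenerate case
    have h40 : 4*A*Cc - B^2 = 0 := by rw [← hD]; exact hΔ
    rcases eq_or_ne A 0 with hA0 | hA0
    · -- parabola with vertical axis
      have hB2 : B^2 = 0 := by rw [hA0] at h40; linarith
      have hB0 : B = 0 := (pow_eq_zero_iff (by norm_num : (2:ℕ) ≠ 0)).mp hB2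
      have hCpos : (0:ℝ) < Cc := by
        have h := hqpos x₀ hx₀
        rw [hA0, hB0] at h
        linarith
      set κ : ℝ := Cc ^ (-3/2 : ℝ) with hκ
      have hy2c : ∀ x ∈ I, y2 x = κ := by
        intro x hx
        rw [hy2q x hx, hA0, hB0, hκ]
        congr 1
        ring
      clear_value κ
      have hy1l : ∀ x ∈ I, y1 x = κ*x + (y1 x₀ - κ*x₀) := by
        intro x hx
        have h := lin0 (fun x => y1 x - κ*x) (fun x hx => by
          have h' := (d1 x hx).hasDerivAt.sub ((hasDerivAt_id x).const_mul κ)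
          have h'' : HasDerivAt (fun x => y1 x - κ*x) 0 x := by
            refine h'.congr_deriv ?_; symm
            simp only [← hy2e]
            rw [hy2c x hx]
            ring
          exact h'') x hx
        have h2 : y1 x - κ*x = y1 x₀ - κ*x₀ := h
        linarith
      set k₁ : ℝ := y1 x₀ - κ*x₀ with hk₁
      clear_value k₁
      have hyl : ∀ x ∈ I, y x = κ/2*x^2 + k₁*x + (y x₀ - κ/2*x₀^2 - k₁*x₀) := by
        intro x hx
        have h := lin0 (fun x => y x - κ/2*x^2 - k₁*x) (fun x hx => by
          have h' := ((d0 x hx).hasDerivAt.sub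
            ((hasDerivAt_pow 2 x).const_mul (κ/2))).sub ((hasDerivAt_id x).const_mul k₁)
          have h'' : HasDerivAt (fun x => y x - κ/2*x^2 - k₁*x) 0 x := by
            refine h'.congr_deriv ?_; symm
            simp only [← hy1e]
            rw [hy1l x hx]
            push_cast
            ring
          exact h'') x hx
        have h2 : y x - κ/2*x^2 - k₁*x = y x₀ - κ/2*x₀^2 - k₁*x₀ := h
        linarith
      refine ⟨κ/2, 0, 0, k₁, -1, y x₀ - κ/2*x₀^2 - k₁*x₀, ?_, ?_⟩
      · intro h
        have := h.2.2.2.2.1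
        norm_num at this
      · intro x hx
        rw [hyl x hx]
        ring
    · -- hyperbola case
      set t : ℝ := B/(2*A) with ht
      have hT : B = 2*A*t := by
        rw [ht]
        field_simp
      have hc : Cc = A*t^2 := by
        have h1 : 4*A*(Cc - A*t^2) = 0 := by
          rw [hT] at h40
          linear_combination h40
        rcases mul_eq_zero.mp h1 with h | h
        · exfalso; apply hA0; linarith
        · linarith
      clear_value t
      clear ht
      have hqv : ∀ x : ℝ, A*x^2 + B*x + Cc = A*(x+t)^2 := by
        intro x
        rw [hT, hc]
        ring
      have hv0 : ∀ x ∈ I, x + t ≠ 0 := by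
        intro x hx h0
        have h := hqpos x hx
        rw [hqv x, h0] at h
        norm_num at h
      have hApos : (0:ℝ) < A := by
        have h := hqpos x₀ hx₀
        rw [hqv x₀] at h
        have hv := hv0 x₀ hx₀
        have hv2 : 0 < (x₀ + t)^2 := by positivity
        nlinarith
      set s : ℝ := if 0 < x₀ + t then (1:ℝ) else (-1:ℝ) with hs
      have hs2 : s*s = 1 := by
        rw [hs]
        split <;> norm_num
      have hs0 : s ≠ 0 := by
        rw [hs]
        split <;> norm_num
      have hsv : ∀ x ∈ I, 0 < s*(x+t) := by
        intro x hx
        by_cases h₀p : 0 < x₀ + t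
        · rw [hs, if_pos h₀p]
          rw [one_mul]
          rcases lt_or_gt_of_ne (hv0 x hx) with hneg | hposx
          · exfalso
            obtain ⟨z, hz, hz0⟩ := hconn.intermediate_value₂ hx hx₀
              ((continuous_id.add continuous_const).continuousOn) continuousOn_const
              (le_of_lt hneg) (le_of_lt h₀p)
            exact hv0 z hz hz0
          · exact hposx
        · rw [hs, if_neg h₀p]
          push_neg at h₀p
          have h₀n : x₀ + t < 0 := lt_of_le_of_ne h₀p (hv0 x₀ hx₀)
          rcases lt_or_gt_of_ne (hv0 x hx) with hneg | hposx
          · nlinarith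
          · exfalso
            obtain ⟨z, hz, hz0⟩ := hconn.intermediate_value₂ hx₀ hx
              ((continuous_id.add continuous_const).continuousOn) continuousOn_const
              (le_of_lt h₀n) (le_of_lt hposx)
            exact hv0 z hz hz0
      clear_value s
      clear hs
      have hs3 : s^3 = s := by linear_combination s * hs2
      have hsinv : s⁻¹ = s := inv_eq_of_mul_eq_one_left hs2
      set K : ℝ := A ^ (-3/2 : ℝ) * s with hK
      have hy2v : ∀ x ∈ I, y2 x = K/(x+t)^3 := by
        intro x hx
        have hw := hsv x hx
        have hvx := hv0 x hx
        rw [hy2q x hx, hqv x]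
        have h1 : A*(x+t)^2 = A*(s*(x+t))^2 := by
          have hss : (s*(x+t))^2 = (x+t)^2 := by
            rw [mul_pow, show s^2 = 1 by linear_combination hs2]
            ring
          rw [hss]
        rw [h1, Real.mul_rpow hApos.le (sq_nonneg _)]
        have h2 : ((s*(x+t))^2 : ℝ) ^ (-3/2 : ℝ) = ((s*(x+t))^3)⁻¹ := by
          rw [← Real.rpow_natCast (s*(x+t)) 2, ← Real.rpow_mul hw.le,
            ← Real.rpow_natCast (s*(x+t)) 3, ← Real.rpow_neg hw.le]
          congr 1
          norm_num
        rw [h2, mul_pow, hs3, mul_inv, hsinv, hK]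
        ring
      clear_value K
      clear hK
      set φ : ℝ → ℝ := fun x => -(K/2) * ((x+t)^2)⁻¹ with hφe
      have hφ : ∀ x ∈ I, HasDerivAt φ (y2 x) x := by
        intro x hx
        have hvx := hv0 x hx
        have h := ((((hasDerivAt_id x).add_const t).pow 2).inv
          (pow_ne_zero 2 hvx)).const_mul (-(K/2))
        refine h.congr_deriv ?_; symm
        rw [hy2v x hx]
        simp only [id_eq, Pi.pow_apply]
        push_cast
        field_simp
      have hy1φ : ∀ x ∈ I, y1 x = φ x + (y1 x₀ - φ x₀) := by
        intro x hx
        have h := lin0 (fun x => y1 x - φ x)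
          (fun x hx => ((d1 x hx).hasDerivAt.sub (hφ x hx)).congr_deriv (by simp [← hy2e])) x hx
        have h2 : y1 x - φ x = y1 x₀ - φ x₀ := h
        linarith
      set k₁ : ℝ := y1 x₀ - φ x₀ with hk₁
      clear_value k₁
      set ψ : ℝ → ℝ := fun x => (K/2) * (x+t)⁻¹ + k₁*x with hψe
      have hψ : ∀ x ∈ I, HasDerivAt ψ (y1 x) x := by
        intro x hx
        have hvx := hv0 x hx
        have h := ((((hasDerivAt_id x).add_const t).inv hvx).const_mul (K/2)).add
          ((hasDerivAt_id x).const_mul k₁)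
        refine h.congr_deriv ?_; symm
        rw [hy1φ x hx]
        simp only [hφe, id_eq]
        ring
      have hyψ : ∀ x ∈ I, y x = ψ x + (y x₀ - ψ x₀) := by
        intro x hx
        have h := lin0 (fun x => y x - ψ x)
          (fun x hx => ((d0 x hx).hasDerivAt.sub (hψ x hx)).congr_deriv (by simp [← hy1e])) x hx
        have h2 : y x - ψ x = y x₀ - ψ x₀ := h
        linarith
      set k₂ : ℝ := y x₀ - ψ x₀ with hk₂
      clear_value k₂
      refine ⟨-k₁, 1, 0, -(k₁*t + k₂), t, -(k₂*t) - K/2, ?_, ?_⟩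
      · intro h
        have := h.2.1
        norm_num at this
      · intro x hx
        have hvx := hv0 x hx
        have hinv : (x+t) * (x+t)⁻¹ = 1 := mul_inv_cancel₀ hvx
        rw [hyψ x hx]
        simp only [hψe]
        linear_combination (K/2) * hinv
  · -- nondegenerate case
    set φ : ℝ → ℝ := fun x => 2/D * ((2*A*x + B) * (A*x^2 + B*x + Cc) ^ (-1/2 : ℝ)) with hφe
    have hφ : ∀ x ∈ I, HasDerivAt φ (y2 x) x := by
      intro x hx
      have hqx := hqpos x hx
      have h := ((((hasDerivAt_id x).const_mul (2*A)).add_const B).mul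
        ((hq' x).rpow_const (p := (-1/2 : ℝ)) (Or.inl hqx.ne'))).const_mul (2/D)
      refine h.congr_deriv ?_; symm
      rw [hy2q x hx, show (-1/2 : ℝ) - 1 = (-3/2 : ℝ) by norm_num]
      have h1 : (A*x^2 + B*x + Cc) ^ (-1/2 : ℝ)
          = (A*x^2 + B*x + Cc) ^ (-3/2 : ℝ) * (A*x^2 + B*x + Cc) := by
        rw [show (-1/2 : ℝ) = (-3/2 : ℝ) + 1 by norm_num, Real.rpow_add hqx, Real.rpow_one]
      rw [h1]
      simp only [id_eq]
      rw [hD] at hΔ ⊢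
      field_simp
      have hΔ' : A*Cc*4 - B^2 ≠ 0 := by rw [show A*Cc*4 - B^2 = 4*A*Cc - B^2 by ring]; exact hΔ
      field_simp [hΔ']
      ring
    have hy1φ : ∀ x ∈ I, y1 x = φ x + (y1 x₀ - φ x₀) := by
      intro x hx
      have h := lin0 (fun x => y1 x - φ x)
        (fun x hx => ((d1 x hx).hasDerivAt.sub (hφ x hx)).congr_deriv (by simp [← hy2e])) x hx
      have h2 : y1 x - φ x = y1 x₀ - φ x₀ := h
      linarith
    set k₁ : ℝ := y1 x₀ - φ x₀ with hk₁
    clear_value k₁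
    set ψ : ℝ → ℝ := fun x => 4/D * (A*x^2 + B*x + Cc) ^ (1/2 : ℝ) + k₁*x with hψe
    have hψ : ∀ x ∈ I, HasDerivAt ψ (y1 x) x := by
      intro x hx
      have hqx := hqpos x hx
      have h := (((hq' x).rpow_const (p := (1/2 : ℝ)) (Or.inl hqx.ne')).const_mul (4/D)).add
        ((hasDerivAt_id x).const_mul k₁)
      refine h.congr_deriv ?_; symm
      rw [hy1φ x hx]
      simp only [hφe, id_eq]
      rw [show (1/2 : ℝ) - 1 = (-1/2 : ℝ) by norm_num]
      ring
    have hyψ : ∀ x ∈ I, y x = ψ x + (y x₀ - ψ x₀) := by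
      intro x hx
      have h := lin0 (fun x => y x - ψ x)
        (fun x hx => ((d0 x hx).hasDerivAt.sub (hψ x hx)).congr_deriv (by simp [← hy1e])) x hx
      have h2 : y x - ψ x = y x₀ - ψ x₀ := h
      linarith
    set k₂ : ℝ := y x₀ - ψ x₀ with hk₂
    clear_value k₂
    refine ⟨k₁^2 - 16*A/D^2, -2*k₁, 1, 2*k₁*k₂ - 16*B/D^2, -2*k₂, k₂^2 - 16*Cc/D^2, ?_, ?_⟩
    · intro h
      exact one_ne_zero h.2.2.1
    · intro x hx
      have hqx := hqpos x hx
      have hs : (A*x^2 + B*x + Cc) ^ (1/2 : ℝ) * (A*x^2 + B*x + Cc) ^ (1/2 : ℝ)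
          = A*x^2 + B*x + Cc := by
        rw [← Real.rpow_add hqx]
        norm_num
      rw [hyψ x hx]
      simp only [hψe]
      linear_combination (16/D^2) * hs


/-- For a C⁵ graph `y = y(x)` over a nonempty open interval with `y'' ≠ 0`,
the vanishing of the projective relative invariant
`R₅ = 9y''²y⁽⁵⁾ − 45y''y'''y⁽⁴⁾ + 40y'''³` characterizes the graphs contained
in a conic (a zero set of a nonzero polynomial of total degree ≤ 2). -/
theorem stmt_11 (I : Set ℝ) (hI : IsOpen I) (hne : I.Nonempty)
    (hconn : IsPreconnected I) (y : ℝ → ℝ) (hy : ContDiffOn ℝ 5 y I)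
    (hy2 : ∀ x ∈ I, deriv (deriv y) x ≠ 0) :
    (∀ x ∈ I,
        9 * (deriv (deriv y) x) ^ 2 * deriv (deriv (deriv (deriv (deriv y)))) x -
          45 * deriv (deriv y) x * deriv (deriv (deriv y)) x *
            deriv (deriv (deriv (deriv y))) x +
          40 * (deriv (deriv (deriv y)) x) ^ 3 = 0) ↔
      ∃ Q : MvPolynomial (Fin 2) ℝ, Q ≠ 0 ∧ Q.totalDegree ≤ 2 ∧
        ∀ x ∈ I, MvPolynomial.eval ![x, y x] Q = 0 := by
  constructor
  · intro hR
    have hc4 : ContDiffOn ℝ 4 (deriv y) I := hy.deriv_of_isOpen hI (by norm_num)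
    have hc3 : ContDiffOn ℝ 3 (deriv (deriv y)) I := hc4.deriv_of_isOpen hI (by norm_num)
    have hcont : ContinuousOn (deriv (deriv y)) I := hc3.continuousOn
    have hdich : (∀ x ∈ I, 0 < deriv (deriv y) x) ∨ (∀ x ∈ I, deriv (deriv y) x < 0) := by
      by_contra hcon
      push_neg at hcon
      obtain ⟨⟨x₁, hx₁, h₁⟩, ⟨x₂, hx₂, h₂⟩⟩ := hcon
      obtain ⟨z, hz, hz0⟩ := hconn.intermediate_value₂ hx₁ hx₂ hcont continuousOn_const h₁ h₂
      exact hy2 z hz hz0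
    rcases hdich with hposs | hneg
    · obtain ⟨a, b, c, d, e, f, hnz, hvan⟩ := key_pos hI hne hconn hy hposs hR
      refine ⟨conic a b c d e f, conic_ne_zero a b c d e f hnz,
        conic_totalDegree a b c d e f, ?_⟩
      intro x hx
      rw [conic_eval]
      exact hvan x hx
    · have hyn : ContDiffOn ℝ 5 (fun x => -(y x)) I := hy.neg
      have hd1 : deriv (fun x => -(y x)) = fun x => -(deriv y x) :=
        funext fun x => deriv.neg
      have hd2 : deriv (deriv (fun x => -(y x))) = fun x => -(deriv (deriv y) x) := by
        rw [hd1]; exact funext fun x => deriv.neg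
      have hd3 : deriv (deriv (deriv (fun x => -(y x))))
          = fun x => -(deriv (deriv (deriv y)) x) := by
        rw [hd2]; exact funext fun x => deriv.neg
      have hd4 : deriv (deriv (deriv (deriv (fun x => -(y x)))))
          = fun x => -(deriv (deriv (deriv (deriv y))) x) := by
        rw [hd3]; exact funext fun x => deriv.neg
      have hd5 : deriv (deriv (deriv (deriv (deriv (fun x => -(y x))))))
          = fun x => -(deriv (deriv (deriv (deriv (deriv y)))) x) := by
        rw [hd4]; exact funext fun x => deriv.neg
      have hposs' : ∀ x ∈ I, 0 < deriv (deriv (fun x => -(y x))) x := by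
        intro x hx
        rw [hd2]
        exact neg_pos.mpr (hneg x hx)
      have hR' : ∀ x ∈ I,
          9 * (deriv (deriv (fun x => -(y x))) x) ^ 2 *
            deriv (deriv (deriv (deriv (deriv (fun x => -(y x)))))) x -
          45 * deriv (deriv (fun x => -(y x))) x *
            deriv (deriv (deriv (fun x => -(y x)))) x *
            deriv (deriv (deriv (deriv (fun x => -(y x))))) x +
          40 * (deriv (deriv (deriv (fun x => -(y x)))) x) ^ 3 = 0 := by
        intro x hx
        rw [hd5, hd4, hd3, hd2]
        simp only
        linear_combination -(hR x hx)
      obtain ⟨a, b, c, d, e, f, hnz, hvan⟩ := key_pos hI hne hconn hyn hposs' hR'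
      refine ⟨conic a (-b) c d (-e) f, conic_ne_zero _ _ _ _ _ _ ?_,
        conic_totalDegree _ _ _ _ _ _, ?_⟩
      · rintro ⟨ha, hb, hc, hd, he, hf⟩
        exact hnz ⟨ha, neg_eq_zero.mp hb, hc, hd, neg_eq_zero.mp he, hf⟩
      · intro x hx
        rw [conic_eval]
        linear_combination hvan x hx
  · rintro ⟨Q, hQ0, hQdeg, hQvan⟩
    have hQe := eq_conic Q hQdeg
    have hvan' : ∀ x ∈ I,
        (coeff (Finsupp.single 0 2) Q) * x ^ 2
        + (coeff (Finsupp.single 0 1 + Finsupp.single 1 1) Q) * (x * y x)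
        + (coeff (Finsupp.single 1 2) Q) * (y x) ^ 2
        + (coeff (Finsupp.single 0 1) Q) * x
        + (coeff (Finsupp.single 1 1) Q) * (y x)
        + (coeff 0 Q) = 0 := by
      intro x hx
      have h := hQvan x hx
      rw [hQe, conic_eval] at h
      exact h
    have hnz' : ¬((coeff (Finsupp.single 0 2) Q) = 0
        ∧ (coeff (Finsupp.single 0 1 + Finsupp.single 1 1) Q) = 0
        ∧ (coeff (Finsupp.single 1 2) Q) = 0
        ∧ (coeff (Finsupp.single 0 1) Q) = 0
        ∧ (coeff (Finsupp.single 1 1) Q) = 0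
        ∧ (coeff 0 Q) = 0) := by
      rintro ⟨ha, hb, hc, hd, he, hf⟩
      apply hQ0
      rw [hQe, ha, hb, hc, hd, he, hf]
      simp [conic]
    exact backward hI hy hy2 hvan' hnz'
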